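/- Sub-gamma (Bernstein/Massart) inequality: let U_1, …, U_n be independent real random variables and suppose there exist constants v > 0 and w > 0 such that Σ_{i=1}^n E[U_i²] ≤ v and, for all integers k ≥ 3, Σ_{i=1}^n E[(U_i)_+^k] ≤ v · k! · w^{k−2} / 2. Then for any ζ ∈ (0, 1/w), E[exp(ζ Σ_{i=1}^n (U_i − E U_i))] ≤ exp(v ζ² / (2 (1 − w ζ))). -/

import Mathlib

open MeasureTheory ProbabilityTheory Real

lemma exp_le_quad_of_nonpos {x : ℝ} (hx : x ≤ 0) :
    Real.exp x ≤ 1 + x + x ^ 2 / 2 := by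
  have hd : ∀ y : ℝ, HasDerivAt (fun y : ℝ => 1 + y + y ^ 2 / 2 - Real.exp y)
      (1 + y - Real.exp y) y := by
    intro y
    have h1 : HasDerivAt (fun y : ℝ => 1 + y) 1 y := (hasDerivAt_id y).const_add 1
    have h2 : HasDerivAt (fun y : ℝ => y ^ 2 / 2) y y := by
      simpa using (hasDerivAt_pow 2 y).div_const 2
    exact (h1.add h2).sub (Real.hasDerivAt_exp y)
  have hanti : Antitone (fun y : ℝ => 1 + y + y ^ 2 / 2 - Real.exp y) := by
    apply antitone_of_deriv_nonpos
    · exact fun y => (hd y).differentiableAt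
    · intro y
      rw [(hd y).deriv]
      have := Real.add_one_le_exp y
      linarith
  have := hanti hx
  simp only [Real.exp_zero] at this
  nlinarith [this]

lemma exp_le_expansion {ζ : ℝ} (hζ : 0 ≤ ζ) (x : ℝ) :
    Real.exp (ζ * x) ≤ 1 + ζ * x + (ζ * x) ^ 2 / 2 +
      (Real.exp (ζ * max x 0) - 1 - ζ * max x 0 - (ζ * max x 0) ^ 2 / 2) := by
  rcases le_or_gt 0 x with h | h
  · rw [max_eq_left h]; ring_nf; exact le_rfl
  · rw [max_eq_right h.le]
    have := exp_le_quad_of_nonpos (mul_nonpos_of_nonneg_of_nonpos hζ h.le)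
    simp only [mul_zero, Real.exp_zero]
    linarith

lemma int_max_pow {Ω : Type*} [MeasurableSpace Ω] {P : Measure Ω} {X : Ω → ℝ}
    (hX : Measurable X) (h : ∀ k : ℕ, Integrable (fun ω => |X ω| ^ k) P) (k : ℕ) :
    Integrable (fun ω => (max (X ω) 0) ^ k) P := by
  refine (h k).mono' (((hX.max measurable_const).pow_const k).aestronglyMeasurable) ?_
  filter_upwards with ω
  rw [Real.norm_eq_abs, abs_pow, abs_of_nonneg (le_max_right _ _)]
  exact pow_le_pow_left₀ (le_max_right _ _) (max_le (le_abs_self _) (abs_nonneg _)) k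

lemma exp_max_integral {Ω : Type*} [MeasurableSpace Ω] (P : Measure Ω) [IsProbabilityMeasure P]
    (X : Ω → ℝ) (hX : Measurable X) (hint : ∀ k : ℕ, Integrable (fun ω => |X ω| ^ k) P)
    (ζ : ℝ) (hζ : 0 ≤ ζ)
    (hsum : Summable (fun k : ℕ => ζ ^ k * (∫ ω, (max (X ω) 0) ^ k ∂P) / (Nat.factorial k))) :
    Integrable (fun ω => Real.exp (ζ * max (X ω) 0)) P ∧
      ∫ ω, Real.exp (ζ * max (X ω) 0) ∂P
        = ∑' k : ℕ, ζ ^ k * (∫ ω, (max (X ω) 0) ^ k ∂P) / (Nat.factorial k) := by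
  have hmax_nonneg : ∀ ω, 0 ≤ max (X ω) 0 := fun ω => le_max_right _ _
  have hmeas_max : Measurable fun ω => max (X ω) 0 := hX.max measurable_const
  have hIntPow := int_max_pow hX hint
  set m : ℕ → ℝ := fun k => ∫ ω, (max (X ω) 0) ^ k ∂P with hm
  have hm_nonneg : ∀ k, 0 ≤ m k := fun k =>
    integral_nonneg fun ω => pow_nonneg (hmax_nonneg ω) k
  set F : ℕ → Ω → ℝ := fun k ω => (ζ * max (X ω) 0) ^ k / (Nat.factorial k) with hF
  have hF_eq : ∀ k ω, F k ω = (ζ ^ k / (Nat.factorial k)) * (max (X ω) 0) ^ k := by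
    intro k ω; simp only [hF, mul_pow]; ring
  have hF_nonneg : ∀ k ω, 0 ≤ F k ω := by
    intro k ω
    exact div_nonneg (pow_nonneg (mul_nonneg hζ (hmax_nonneg ω)) k) (by positivity)
  have hF_int : ∀ k, Integrable (F k) P := by
    intro k
    have := (hIntPow k).const_mul (ζ ^ k / (Nat.factorial k))
    exact this.congr (by filter_upwards with ω using (hF_eq k ω).symm)
  have hF_integral : ∀ k, ∫ ω, F k ω ∂P = ζ ^ k * m k / (Nat.factorial k) := by
    intro k
    simp_rw [hF_eq]
    rw [integral_const_mul]
    ring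
  have h_norm_sum : Summable fun k => ∫ ω, ‖F k ω‖ ∂P := by
    refine hsum.congr fun k => ?_
    rw [← hF_integral k]
    refine integral_congr_ae ?_
    filter_upwards with ω using (Real.norm_of_nonneg (hF_nonneg k ω)).symm
  have hexp : ∀ y : ℝ, Real.exp y = ∑' n : ℕ, y ^ n / (Nat.factorial n) := by
    intro y
    rw [Real.exp_eq_exp_ℝ, NormedSpace.exp_eq_tsum_div]
  have h_ptwise : ∀ ω, Real.exp (ζ * max (X ω) 0) = ∑' k, F k ω := fun ω =>
    hexp (ζ * max (X ω) 0)
  have h_hasSum := hasSum_integral_of_summable_integral_norm hF_int h_norm_sum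
  have h_int_eq : ∫ ω, Real.exp (ζ * max (X ω) 0) ∂P
      = ∑' k : ℕ, ζ ^ k * m k / (Nat.factorial k) := by
    rw [show (fun ω => Real.exp (ζ * max (X ω) 0)) = fun ω => ∑' k, F k ω from
      funext h_ptwise] at *
    rw [← h_hasSum.tsum_eq]
    exact tsum_congr hF_integral
  have hInt : Integrable (fun ω => Real.exp (ζ * max (X ω) 0)) P := by
    constructor
    · exact ((hmeas_max.const_mul ζ).exp).aestronglyMeasurable
    · rw [hasFiniteIntegral_iff_ofReal (by filter_upwards with ω using (Real.exp_pos _).le)]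
      have h1 : ∀ ω, ENNReal.ofReal (Real.exp (ζ * max (X ω) 0))
          = ∑' k, ENNReal.ofReal (F k ω) := by
        intro ω
        rw [h_ptwise ω, ENNReal.ofReal_tsum_of_nonneg (hF_nonneg · ω)]
        exact Real.summable_pow_div_factorial _
      calc ∫⁻ ω, ENNReal.ofReal (Real.exp (ζ * max (X ω) 0)) ∂P
          = ∫⁻ ω, ∑' k, ENNReal.ofReal (F k ω) ∂P := by
            exact lintegral_congr fun ω => h1 ω
        _ = ∑' k, ∫⁻ ω, ENNReal.ofReal (F k ω) ∂P := by
            refine lintegral_tsum fun k => ?_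
            exact ((hF_int k).1.aemeasurable).ennreal_ofReal
        _ = ∑' k, ENNReal.ofReal (ζ ^ k * m k / (Nat.factorial k)) := by
            refine tsum_congr fun k => ?_
            rw [← ofReal_integral_eq_lintegral_ofReal (hF_int k)
              (by filter_upwards with ω using hF_nonneg k ω), hF_integral k]
        _ = ENNReal.ofReal (∑' k, ζ ^ k * m k / (Nat.factorial k)) := by
            rw [ENNReal.ofReal_tsum_of_nonneg (fun k => by positivity) hsum]
        _ < ⊤ := ENNReal.ofReal_lt_top
  exact ⟨hInt, h_int_eq⟩

set_option maxHeartbeats 1000000 in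
theorem subgamma_exponential_moment
    {Ω : Type*} [MeasurableSpace Ω] (P : Measure Ω) [IsProbabilityMeasure P]
    (n : ℕ)
    (U : Fin n → Ω → ℝ) (hmeas : ∀ i, Measurable (U i))
    (hindep : iIndepFun U P)
    (hmomint : ∀ i (k : ℕ), Integrable (fun ω => |U i ω| ^ k) P)
    (v w : ℝ) (hv : 0 < v) (hw : 0 < w)
    (hsq : ∑ i, ∫ ω, (U i ω) ^ 2 ∂P ≤ v)
    (hmom : ∀ k : ℕ, 3 ≤ k →
      ∑ i, ∫ ω, (max (U i ω) 0) ^ k ∂P ≤ v * (Nat.factorial k) * w ^ (k - 2) / 2) :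
    ∀ ζ : ℝ, ζ ∈ Set.Ioo 0 (1 / w) →
      ∫ ω, Real.exp (ζ * ∑ i, (U i ω - ∫ ω', U i ω' ∂P)) ∂P ≤
        Real.exp (v * ζ ^ 2 / (2 * (1 - w * ζ))) := by
  intro ζ hζ
  obtain ⟨hζ0, hζ1⟩ := hζ
  have hζw : ζ * w < 1 := (lt_div_iff₀ hw).mp hζ1
  have hζw0 : 0 ≤ ζ * w := mul_nonneg hζ0.le hw.le
  have hden : (0:ℝ) < 1 - ζ * w := by linarith
  set c : Fin n → ℝ := fun i => ∫ ω', U i ω' ∂P with hc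
  set m : Fin n → ℕ → ℝ := fun i k => ∫ ω, (max (U i ω) 0) ^ k ∂P with hm
  have hm_nonneg : ∀ i k, 0 ≤ m i k := fun i k =>
    integral_nonneg fun ω => pow_nonneg (le_max_right _ _) k
  have hmom' : ∀ k : ℕ, 3 ≤ k → ∑ i, m i k ≤ v * (Nat.factorial k) * w ^ (k - 2) / 2 := by
    intro k hk; exact hmom k hk
  have hm_le : ∀ i, ∀ k, 3 ≤ k → m i k ≤ v * (Nat.factorial k) * w ^ (k - 2) / 2 := by
    intro i k hk
    calc m i k ≤ ∑ j, m j k :=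
          Finset.single_le_sum (fun j _ => hm_nonneg j k) (Finset.mem_univ i)
      _ ≤ _ := hmom' k hk
  have hgeo : Summable (fun k : ℕ => (v / 2 * ζ ^ 3 * w) * (ζ * w) ^ k) :=
    (summable_geometric_of_lt_one hζw0 hζw).mul_left _
  have hfac_pos : ∀ k : ℕ, (0:ℝ) < (Nat.factorial k : ℝ) := fun k =>
    Nat.cast_pos.mpr (Nat.factorial_pos k)
  have hterm_le : ∀ (i : Fin n) (k : ℕ),
      ζ ^ (k+3) * m i (k+3) / (Nat.factorial (k+3))
        ≤ (v / 2 * ζ ^ 3 * w) * (ζ * w) ^ k := by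
    intro i k
    have h1 : m i (k+3) ≤ v * (Nat.factorial (k+3)) * w ^ (k+1) / 2 := by
      have := hm_le i (k+3) (by omega)
      simpa using this
    calc ζ ^ (k+3) * m i (k+3) / (Nat.factorial (k+3))
        ≤ ζ ^ (k+3) * (v * (Nat.factorial (k+3)) * w ^ (k+1) / 2) / (Nat.factorial (k+3)) := by
          gcongr
      _ = (v / 2 * ζ ^ 3 * w) * (ζ * w) ^ k := by
          field_simp
          ring
  have hshift : ∀ i, Summable (fun k : ℕ =>
      ζ ^ (k+3) * m i (k+3) / (Nat.factorial (k+3))) := by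
    intro i
    refine Summable.of_nonneg_of_le (fun k => by positivity) (fun k => hterm_le i k) hgeo
  have hsumm : ∀ i, Summable (fun k => ζ ^ k * m i k / (Nat.factorial k)) := by
    intro i
    exact (summable_nat_add_iff (f := fun k => ζ ^ k * m i k / (Nat.factorial k)) 3).mp (hshift i)
  have hU_int : ∀ i, Integrable (U i) P := by
    intro i
    have h := hmomint i 1
    simp only [pow_one] at h
    exact (integrable_norm_iff (hmeas i).aestronglyMeasurable).mp
      (by simpa [Real.norm_eq_abs] using h)
  have hU2_int : ∀ i, Integrable (fun ω => (U i ω) ^ 2) P := by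
    intro i
    have h := hmomint i 2
    simpa [sq_abs] using h
  have hmax_int : ∀ i k, Integrable (fun ω => (max (U i ω) 0) ^ k) P := fun i =>
    int_max_pow (hmeas i) (hmomint i)
  have hkey : ∀ i, Integrable (fun ω => Real.exp (ζ * max (U i ω) 0)) P ∧
      ∫ ω, Real.exp (ζ * max (U i ω) 0) ∂P
        = ∑' k : ℕ, ζ ^ k * m i k / (Nat.factorial k) := by
    intro i
    exact exp_max_integral P (U i) (hmeas i) (hmomint i) ζ hζ0.le (hsumm i)
  -- tail sums
  set G : Fin n → ℝ := fun i => ∑' k : ℕ,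
    ζ ^ (k+3) * m i (k+3) / (Nat.factorial (k+3)) with hG
  have hG_nonneg : ∀ i, 0 ≤ G i := by
    intro i
    exact tsum_nonneg fun k => by positivity
  -- expansion of the full sum
  have hm0 : ∀ i, m i 0 = 1 := by
    intro i
    simp only [hm, pow_zero, integral_const, measure_univ, ENNReal.toReal_one, probReal_univ, smul_eq_mul,
      mul_one, one_smul]
  have hS : ∀ i, ∑' k : ℕ, ζ ^ k * m i k / (Nat.factorial k)
      = 1 + ζ * m i 1 + ζ ^ 2 / 2 * m i 2 + G i := by
    intro i
    have h1 : Summable (fun k => ζ ^ (k+1) * m i (k+1) / (Nat.factorial (k+1))) :=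
      (summable_nat_add_iff (f := fun k => ζ ^ k * m i k / (Nat.factorial k)) 1).mpr (hsumm i)
    have h2 : Summable (fun k => ζ ^ (k+2) * m i (k+2) / (Nat.factorial (k+2))) :=
      (summable_nat_add_iff (f := fun k => ζ ^ k * m i k / (Nat.factorial k)) 2).mpr (hsumm i)
    rw [Summable.tsum_eq_zero_add (hsumm i), Summable.tsum_eq_zero_add h1, Summable.tsum_eq_zero_add h2]
    have htail : ∑' k : ℕ, ζ ^ (k+1+1+1) * m i (k+1+1+1) / (Nat.factorial (k+1+1+1)) = G i := by
      rw [hG]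
    simp only [pow_zero, Nat.factorial_zero, Nat.cast_one, div_one, one_mul, hm0 i,
      pow_one, Nat.factorial_one, Nat.factorial_two, zero_add]
    rw [htail]
    push_cast
    ring
  -- integrability of exp (ζ * U i)
  have hexpU_int : ∀ i, Integrable (fun ω => Real.exp (ζ * U i ω)) P := by
    intro i
    refine ((hkey i).1).mono' (((hmeas i).const_mul ζ).exp).aestronglyMeasurable ?_
    filter_upwards with ω
    rw [Real.norm_of_nonneg (Real.exp_pos _).le]
    exact Real.exp_le_exp.mpr (mul_le_mul_of_nonneg_left (le_max_left _ _) hζ0.le)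
  -- per-variable bound on the exponential moment
  have hbound : ∀ i, ∫ ω, Real.exp (ζ * U i ω) ∂P
      ≤ 1 + ζ * c i + ζ ^ 2 / 2 * (∫ ω, (U i ω) ^ 2 ∂P) + G i := by
    intro i
    set p : Ω → ℝ := fun ω => 1 + ζ * U i ω + (ζ * U i ω) ^ 2 / 2 with hp
    set q : Ω → ℝ := fun ω => Real.exp (ζ * max (U i ω) 0) - 1 - ζ * max (U i ω) 0
      - (ζ * max (U i ω) 0) ^ 2 / 2 with hq
    have hsq_int : Integrable (fun ω => (ζ * U i ω) ^ 2 / 2) P := by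
      have := (hU2_int i).const_mul (ζ ^ 2 / 2)
      exact this.congr (by filter_upwards with ω; rw [mul_pow]; ring)
    have hp_int : Integrable p P := by
      refine (((integrable_const 1).add ((hU_int i).const_mul ζ)).add hsq_int)
    have hmsq_int : Integrable (fun ω => (ζ * max (U i ω) 0) ^ 2 / 2) P := by
      have := (hmax_int i 2).const_mul (ζ ^ 2 / 2)
      exact this.congr (by filter_upwards with ω; rw [mul_pow]; ring)
    have hm1_int : Integrable (fun ω => ζ * max (U i ω) 0) P := by
      have := (hmax_int i 1).const_mul ζ
      exact this.congr (by filter_upwards with ω; simp)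
    have hq_int : Integrable q P := by
      exact ((((hkey i).1).sub (integrable_const 1)).sub hm1_int).sub hmsq_int
    have hptwise : ∀ ω, Real.exp (ζ * U i ω) ≤ p ω + q ω := by
      intro ω
      have := exp_le_expansion hζ0.le (U i ω)
      simp only [hp, hq]
      linarith
    have h11 : Integrable (fun ω => 1 + ζ * U i ω) P := by
      exact (integrable_const 1).add ((hU_int i).const_mul ζ)
    have hInt_p : ∫ ω, p ω ∂P = 1 + ζ * c i + ζ ^ 2 / 2 * (∫ ω, (U i ω) ^ 2 ∂P) := by
      rw [hp]
      rw [show (fun ω => 1 + ζ * U i ω + (ζ * U i ω) ^ 2 / 2)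
          = fun ω => (1 + ζ * U i ω) + (ζ * U i ω) ^ 2 / 2 from rfl]
      rw [integral_add h11 hsq_int, integral_add (integrable_const 1) ((hU_int i).const_mul ζ)]
      have e1 : ∫ (_ : Ω), (1:ℝ) ∂P = 1 := by simp
      have e2 : ∫ ω, ζ * U i ω ∂P = ζ * c i := by rw [integral_const_mul]
      have e3 : ∫ ω, (ζ * U i ω) ^ 2 / 2 ∂P = ζ ^ 2 / 2 * (∫ ω, (U i ω) ^ 2 ∂P) := by
        rw [show (fun ω => (ζ * U i ω) ^ 2 / 2) = fun ω => ζ ^ 2 / 2 * (U i ω) ^ 2 from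
          funext fun ω => by rw [mul_pow]; ring]
        rw [integral_const_mul]
      rw [e1, e2, e3]
    have h21 : Integrable (fun ω => Real.exp (ζ * max (U i ω) 0) - 1) P := by
      exact ((hkey i).1).sub (integrable_const 1)
    have h22 : Integrable (fun ω => Real.exp (ζ * max (U i ω) 0) - 1 - ζ * max (U i ω) 0) P := by
      exact h21.sub hm1_int
    have hInt_q : ∫ ω, q ω ∂P = G i := by
      rw [hq]
      rw [integral_sub h22 hmsq_int, integral_sub h21 hm1_int,
        integral_sub ((hkey i).1) (integrable_const 1)]
      have e1 : ∫ (_ : Ω), (1:ℝ) ∂P = 1 := by simp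
      have e2 : ∫ ω, ζ * max (U i ω) 0 ∂P = ζ * m i 1 := by
        rw [integral_const_mul]
        congr 1
        simp only [hm]
        exact integral_congr_ae (by filter_upwards with ω; rw [pow_one])
      have e3 : ∫ ω, (ζ * max (U i ω) 0) ^ 2 / 2 ∂P = ζ ^ 2 / 2 * m i 2 := by
        rw [show (fun ω => (ζ * max (U i ω) 0) ^ 2 / 2)
            = fun ω => ζ ^ 2 / 2 * (max (U i ω) 0) ^ 2 from
          funext fun ω => by rw [mul_pow]; ring]
        rw [integral_const_mul]
      rw [e1, e2, e3, (hkey i).2, hS i]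
      ring
    calc ∫ ω, Real.exp (ζ * U i ω) ∂P
        ≤ ∫ ω, (p ω + q ω) ∂P := integral_mono (hexpU_int i) (hp_int.add hq_int) hptwise
      _ = (∫ ω, p ω ∂P) + ∫ ω, q ω ∂P := integral_add hp_int hq_int
      _ = 1 + ζ * c i + ζ ^ 2 / 2 * (∫ ω, (U i ω) ^ 2 ∂P) + G i := by
          rw [hInt_p, hInt_q]
  -- mgf machinery
  set Y : Fin n → Ω → ℝ := fun i ω => U i ω - c i with hY
  have hYmeas : ∀ i, Measurable (Y i) := fun i => (hmeas i).sub measurable_const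
  have hYindep : iIndepFun Y P := by
    have := hindep.comp (fun i => fun x : ℝ => x - c i)
      (fun i => measurable_id.sub measurable_const)
    exact this
  have hmgf_sum : mgf (∑ i, Y i) P ζ = ∏ i, mgf (Y i) P ζ :=
    hYindep.mgf_sum hYmeas Finset.univ
  have hgoal_eq : ∫ ω, Real.exp (ζ * ∑ i, (U i ω - c i)) ∂P = mgf (∑ i, Y i) P ζ := by
    rw [mgf]
    refine integral_congr_ae ?_
    filter_upwards with ω
    congr 1
    rw [Finset.sum_apply]
  have hmgf_i : ∀ i, mgf (Y i) P ζ
      ≤ Real.exp (ζ ^ 2 / 2 * (∫ ω, (U i ω) ^ 2 ∂P) + G i) := by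
    intro i
    have hA0 : 0 ≤ ζ ^ 2 / 2 * (∫ ω, (U i ω) ^ 2 ∂P) + G i := by
      have h1 : 0 ≤ ∫ ω, (U i ω) ^ 2 ∂P := integral_nonneg fun ω => sq_nonneg _
      have := hG_nonneg i
      positivity
    have h1 : mgf (Y i) P ζ = Real.exp (-(ζ * c i)) * ∫ ω, Real.exp (ζ * U i ω) ∂P := by
      rw [mgf]
      rw [show (fun ω => Real.exp (ζ * Y i ω))
          = fun ω => Real.exp (-(ζ * c i)) * Real.exp (ζ * U i ω) from
        funext fun ω => by rw [hY, ← Real.exp_add]; ring_nf]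
      rw [integral_const_mul]
    have hb := hbound i
    calc mgf (Y i) P ζ = Real.exp (-(ζ * c i)) * ∫ ω, Real.exp (ζ * U i ω) ∂P := h1
      _ ≤ Real.exp (-(ζ * c i))
          * (1 + ζ * c i + (ζ ^ 2 / 2 * (∫ ω, (U i ω) ^ 2 ∂P) + G i)) := by
          refine mul_le_mul_of_nonneg_left ?_ (Real.exp_pos _).le
          linarith
      _ ≤ Real.exp (-(ζ * c i))
          * Real.exp (ζ * c i + (ζ ^ 2 / 2 * (∫ ω, (U i ω) ^ 2 ∂P) + G i)) := by
          refine mul_le_mul_of_nonneg_left ?_ (Real.exp_pos _).le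
          have := Real.add_one_le_exp
            (ζ * c i + (ζ ^ 2 / 2 * (∫ ω, (U i ω) ^ 2 ∂P) + G i))
          linarith
      _ = Real.exp (ζ ^ 2 / 2 * (∫ ω, (U i ω) ^ 2 ∂P) + G i) := by
          rw [← Real.exp_add]; ring_nf
  -- summing the tails
  have hGsum : ∑ i, G i ≤ v / 2 * ζ ^ 3 * w / (1 - ζ * w) := by
    have h1 : ∑ i, G i = ∑' k : ℕ, ∑ i, ζ ^ (k+3) * m i (k+3) / (Nat.factorial (k+3)) := by
      rw [hG]
      exact (Summable.tsum_finsetSum (fun i _ => hshift i)).symm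
    rw [h1]
    have hsum_lhs : Summable (fun k : ℕ =>
        ∑ i, ζ ^ (k+3) * m i (k+3) / (Nat.factorial (k+3))) :=
      summable_sum (fun i _ => hshift i)
    have h2 : ∀ k : ℕ, ∑ i, ζ ^ (k+3) * m i (k+3) / (Nat.factorial (k+3))
        ≤ (v / 2 * ζ ^ 3 * w) * (ζ * w) ^ k := by
      intro k
      have he : ∑ i, ζ ^ (k+3) * m i (k+3) / (Nat.factorial (k+3))
          = ζ ^ (k+3) / (Nat.factorial (k+3)) * ∑ i, m i (k+3) := by
        rw [Finset.mul_sum]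
        exact Finset.sum_congr rfl fun i _ => by ring
      rw [he]
      have h3 : ∑ i, m i (k+3) ≤ v * (Nat.factorial (k+3)) * w ^ (k+1) / 2 := by
        have := hmom' (k+3) (by omega)
        simpa using this
      calc ζ ^ (k+3) / (Nat.factorial (k+3)) * ∑ i, m i (k+3)
          ≤ ζ ^ (k+3) / (Nat.factorial (k+3)) * (v * (Nat.factorial (k+3)) * w ^ (k+1) / 2) := by
            refine mul_le_mul_of_nonneg_left h3 (by positivity)
        _ = (v / 2 * ζ ^ 3 * w) * (ζ * w) ^ k := by
            rw [div_mul_eq_mul_div, mul_comm]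
            field_simp
            ring
    calc ∑' k : ℕ, ∑ i, ζ ^ (k+3) * m i (k+3) / (Nat.factorial (k+3))
        ≤ ∑' k : ℕ, (v / 2 * ζ ^ 3 * w) * (ζ * w) ^ k := Summable.tsum_le_tsum h2 hsum_lhs hgeo
      _ = (v / 2 * ζ ^ 3 * w) * (1 - ζ * w)⁻¹ := by
          rw [tsum_mul_left, tsum_geometric_of_lt_one hζw0 hζw]
      _ = v / 2 * ζ ^ 3 * w / (1 - ζ * w) := by ring
  -- final computation
  have hfinal : ∑ i, (ζ ^ 2 / 2 * (∫ ω, (U i ω) ^ 2 ∂P) + G i)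
      ≤ v * ζ ^ 2 / (2 * (1 - w * ζ)) := by
    rw [Finset.sum_add_distrib, ← Finset.mul_sum]
    have h1 : ζ ^ 2 / 2 * ∑ i, ∫ ω, (U i ω) ^ 2 ∂P ≤ ζ ^ 2 / 2 * v :=
      mul_le_mul_of_nonneg_left hsq (by positivity)
    have hkeyeq : ζ ^ 2 / 2 * v + v / 2 * ζ ^ 3 * w / (1 - ζ * w)
        = v * ζ ^ 2 / (2 * (1 - w * ζ)) := by
      have hne : 1 - ζ * w ≠ 0 := ne_of_gt hden
      have hne' : 1 - w * ζ ≠ 0 := by rw [mul_comm]; exact hne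
      field_simp
      ring
    have := hGsum
    linarith
  calc ∫ ω, Real.exp (ζ * ∑ i, (U i ω - c i)) ∂P
      = ∏ i, mgf (Y i) P ζ := by rw [hgoal_eq, hmgf_sum]
    _ ≤ ∏ i, Real.exp (ζ ^ 2 / 2 * (∫ ω, (U i ω) ^ 2 ∂P) + G i) :=
        Finset.prod_le_prod (fun i _ => mgf_nonneg) (fun i _ => hmgf_i i)
    _ = Real.exp (∑ i, (ζ ^ 2 / 2 * (∫ ω, (U i ω) ^ 2 ∂P) + G i)) := by
        rw [Real.exp_sum]
    _ ≤ Real.exp (v * ζ ^ 2 / (2 * (1 - w * ζ))) := Real.exp_le_exp.mpr hfinal
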